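/- In each of the six modal fragments ML_{3XOR,◇}[{p}], ML_{3XOR,□}[{p}], ML_{oxor,◇}[{p}], ML_{oxor,□}[{p}], ML_{aimp,◇}[{p}], and ML_{aimp,□}[{p}], the atomic formula p cannot be uniquely characterized by any finite set of labeled examples (over finite pointed Kripke models, with respect to the logic K). Consequently, none of these fragments admits finite characterizations. -/

import Mathlib

set_option maxHeartbeats 1000000

/-! ### Modal formulas -/

inductive MF : Type
  | var : ℕ → MF
  | neg : MF → MF
  | and : MF → MF → MF
  | or : MF → MF → MF
  | dia : MF → MF
  | box : MF → MF

namespace MF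

/-- Implication `φ → ψ`, as the abbreviation `¬φ ∨ ψ`. -/
def imp (φ ψ : MF) : MF := .or (.neg φ) ψ

/-- Bi-implication `φ ↔ ψ`. -/
def iff (φ ψ : MF) : MF := .and (φ.imp ψ) (ψ.imp φ)

/-- `⊥` abbreviates `p ∧ ¬p`. -/
def bot : MF := .and (.var 0) (.neg (.var 0))

/-- `⊤` abbreviates `p ∨ ¬p`. -/
def top : MF := .or (.var 0) (.neg (.var 0))

/-- A formula is purely propositional if it contains no modal operators. -/
def isProp : MF → Prop
  | .var _ => True
  | .neg φ => φ.isProp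
  | .and φ ψ => φ.isProp ∧ ψ.isProp
  | .or φ ψ => φ.isProp ∧ ψ.isProp
  | .dia _ => False
  | .box _ => False

/-- Boolean evaluation (meaningful for purely propositional formulas). -/
def propEval (v : ℕ → Bool) : MF → Bool
  | .var n => v n
  | .neg φ => !(propEval v φ)
  | .and φ ψ => propEval v φ && propEval v ψ
  | .or φ ψ => propEval v φ || propEval v ψ
  | .dia φ => propEval v φ
  | .box φ => propEval v φ

/-- Propositional tautologies. -/
def isTautology (φ : MF) : Prop := φ.isProp ∧ ∀ v, φ.propEval v = true

/-- Uniform substitution. -/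
def subst (σ : ℕ → MF) : MF → MF
  | .var n => σ n
  | .neg φ => .neg (φ.subst σ)
  | .and φ ψ => .and (φ.subst σ) (ψ.subst σ)
  | .or φ ψ => .or (φ.subst σ) (ψ.subst σ)
  | .dia φ => .dia (φ.subst σ)
  | .box φ => .box (φ.subst σ)

/-- The set of propositional variables occurring in a formula. -/
def vars : MF → Set ℕ
  | .var n => {n}
  | .neg φ => φ.vars
  | .and φ ψ => φ.vars ∪ ψ.vars
  | .or φ ψ => φ.vars ∪ ψ.vars
  | .dia φ => φ.vars
  | .box φ => φ.vars

/-- Kripke satisfaction. -/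
def sat {W : Type} (R : W → W → Prop) (V : ℕ → W → Prop) : MF → W → Prop
  | .var n, w => V n w
  | .neg φ, w => ¬ sat R V φ w
  | .and φ ψ, w => sat R V φ w ∧ sat R V ψ w
  | .or φ ψ, w => sat R V φ w ∨ sat R V ψ w
  | .dia φ, w => ∃ u, R w u ∧ sat R V φ u
  | .box φ, w => ∀ u, R w u → sat R V φ u

/-- `◇^n φ`. -/
def diaIter : ℕ → MF → MF
  | 0, φ => φ
  | n + 1, φ => .dia (diaIter n φ)

/-- `□^n φ`. -/
def boxIter : ℕ → MF → MF
  | 0, φ => φ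
  | n + 1, φ => .box (boxIter n φ)

/-- `◇^{≤n} φ`, the disjunction of `◇^k φ` for `0 ≤ k ≤ n`. -/
def diaLe : ℕ → MF → MF
  | 0, φ => φ
  | n + 1, φ => .or (diaLe n φ) (diaIter (n + 1) φ)

/-- An injective numeric encoding of modal formulas. -/
def encodeMF : MF → ℕ
  | .var n => Nat.pair 0 n
  | .neg φ => Nat.pair 1 φ.encodeMF
  | .and φ ψ => Nat.pair 2 (Nat.pair φ.encodeMF ψ.encodeMF)
  | .or φ ψ => Nat.pair 3 (Nat.pair φ.encodeMF ψ.encodeMF)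
  | .dia φ => Nat.pair 4 φ.encodeMF
  | .box φ => Nat.pair 5 φ.encodeMF

end MF

/-- A normal modal logic. -/
structure NormalLogic (Λ : Set MF) : Prop where
  taut : ∀ φ, φ.isTautology → φ ∈ Λ
  axK : ∀ φ ψ, ((MF.box (φ.imp ψ)).imp ((MF.box φ).imp (MF.box ψ))) ∈ Λ
  dual : ∀ φ, ((MF.dia φ).iff (MF.neg (MF.box (MF.neg φ)))) ∈ Λ
  mp : ∀ φ ψ, φ.imp ψ ∈ Λ → φ ∈ Λ → ψ ∈ Λ
  usubst : ∀ φ (σ : ℕ → MF), φ ∈ Λ → φ.subst σ ∈ Λ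
  nec : ∀ φ, φ ∈ Λ → MF.box φ ∈ Λ

/-- Validity on the frame `F_⊙` consisting of a single reflexive world. -/
def validOnReflPoint (φ : MF) : Prop :=
  ∀ V : ℕ → Prop, MF.sat (W := Unit) (fun _ _ => True) (fun n _ => V n) φ ()

/-- Validity on the frame `F_•` consisting of a single irreflexive world. -/
def validOnIrreflPoint (φ : MF) : Prop :=
  ∀ V : ℕ → Prop, MF.sat (W := Unit) (fun _ _ => False) (fun n _ => V n) φ ()

/-- Type A: `F_⊙ ⊨ Λ`. -/
def TypeA (Λ : Set MF) : Prop := ∀ φ ∈ Λ, validOnReflPoint φ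

/-- Type B: `F_• ⊨ Λ` and `Λ ⊢ □^n ⊥` for some `n ≥ 1`. -/
def TypeB (Λ : Set MF) : Prop :=
  (∀ φ ∈ Λ, validOnIrreflPoint φ) ∧ ∃ n ≥ 1, MF.boxIter n MF.bot ∈ Λ

/-- Type C: `F_• ⊨ Λ`, `Λ ⊬ □^n ⊥` for all `n ≥ 1`, `Λ ⊢ ◇^{≤n} □⊥` for some `n ≥ 1`. -/
def TypeC (Λ : Set MF) : Prop :=
  (∀ φ ∈ Λ, validOnIrreflPoint φ) ∧ (∀ n ≥ 1, MF.boxIter n MF.bot ∉ Λ) ∧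
    ∃ n ≥ 1, MF.diaLe n (MF.box MF.bot) ∈ Λ

/-- The (expansions of the) fragment `ML_Φ`: the smallest set of modal formulas containing
all propositional variables and closed under applying the connectives given by the formulas in
`Φ` (i.e., substituting fragment formulas into a member of `Φ`). -/
inductive MLFrag (Φ : Set MF) : MF → Prop
  | var (n : ℕ) : MLFrag Φ (MF.var n)
  | app (φ : MF) (hφ : φ ∈ Φ) (σ : ℕ → MF) (hσ : ∀ n, MLFrag Φ (σ n)) :
      MLFrag Φ (φ.subst σ)

/-- Expressive containment `ML_Φ ≼^Λ ML_Ψ`. -/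
def exprLe (Λ : Set MF) (Φ Ψ : Set MF) : Prop :=
  ∀ φ, MLFrag Φ φ → ∃ ψ, MLFrag Ψ ψ ∧ (φ.iff ψ) ∈ Λ

/-- Expressive equivalence with respect to `Λ`. -/
def exprEq (Λ : Set MF) (Φ Ψ : Set MF) : Prop := exprLe Λ Φ Ψ ∧ exprLe Λ Ψ Φ

/-- The minimal normal modal logic `K`: (semantically) the set of formulas valid in all
Kripke models. -/
def KLogic : Set MF :=
  {φ | ∀ (W : Type) (R : W → W → Prop) (V : ℕ → W → Prop) (w : W), MF.sat R V φ w}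

/-! ### Boolean functions and clones -/

/-- A Boolean function of positive arity. -/
structure BFun : Type where
  arity : ℕ
  arity_pos : 0 < arity
  eval : (Fin arity → Bool) → Bool

/-- A Boolean clone: a set of Boolean functions containing all projections and
closed under composition. -/
def IsClone (C : Set BFun) : Prop :=
  (∀ (n : ℕ) (hn : 0 < n) (k : Fin n), (⟨n, hn, fun v => v k⟩ : BFun) ∈ C) ∧
  (∀ f ∈ C, ∀ (m : ℕ) (hm : 0 < m) (g : Fin (BFun.arity f) → (Fin m → Bool) → Bool),
    (∀ i, (⟨m, hm, g i⟩ : BFun) ∈ C) →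
    (⟨m, hm, fun v => f.eval (fun i => g i v)⟩ : BFun) ∈ C)

/-- The clone generated by a set of Boolean functions. -/
def cloneGen (O : Set BFun) : Set BFun := ⋂₀ {C : Set BFun | IsClone C ∧ O ⊆ C}

/-- `O ≼ O'`: the clone generated by `O` is contained in the clone generated by `O'`. -/
def cloneLe (O O' : Set BFun) : Prop := cloneGen O ⊆ cloneGen O'

/-- The constant-true unary Boolean function. -/
def bfTop : BFun := ⟨1, Nat.one_pos, fun _ => true⟩
/-- The constant-false unary Boolean function. -/
def bfBot : BFun := ⟨1, Nat.one_pos, fun _ => false⟩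
/-- Negation. -/
def bfNot : BFun := ⟨1, Nat.one_pos, fun v => !(v 0)⟩
/-- Binary conjunction. -/
def bfAnd : BFun := ⟨2, Nat.succ_pos 1, fun v => v 0 && v 1⟩
/-- Binary disjunction. -/
def bfOr : BFun := ⟨2, Nat.succ_pos 1, fun v => v 0 || v 1⟩
/-- Ternary exclusive or `x ⊕ y ⊕ z`. -/
def bf3Xor : BFun := ⟨3, Nat.succ_pos 2, fun v => (v 0).xor ((v 1).xor (v 2))⟩
/-- `oxor(x,y,z) = x ∨ (y ⊕ z)`. -/
def bfOxor : BFun := ⟨3, Nat.succ_pos 2, fun v => v 0 || ((v 1).xor (v 2))⟩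
/-- `aimp(x,y,z) = x ∧ (y → z)`. -/
def bfAimp : BFun := ⟨3, Nat.succ_pos 2, fun v => v 0 && (!(v 1) || v 2)⟩

/-- The (purely propositional) formula `φ` defines the Boolean function `f`. -/
def definesBF (φ : MF) (f : BFun) : Prop :=
  φ.isProp ∧ ∀ v : ℕ → Bool, φ.propEval v = f.eval (fun i => v i.val)

/-- The generating set of formulas of the simple fragment `ML_{M ∪ O}`, where
`M ⊆ {◇,□}` is specified by the two Booleans `hd` (for `◇`) and `hb` (for `□`). -/
def MOgen (hd hb : Bool) (O : Set BFun) : Set MF :=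
  {φ | (hd = true ∧ φ = MF.dia (MF.var 0)) ∨ (hb = true ∧ φ = MF.box (MF.var 0)) ∨
    ∃ f ∈ O, definesBF φ f}

/-- `Clos^Λ_M(O)`: the set of Boolean functions `f` such that some propositional formula
defining `f` is `Λ`-equivalent to some `ML_{M ∪ O}`-formula. -/
def Clos (Λ : Set MF) (hd hb : Bool) (O : Set BFun) : Set BFun :=
  {f | ∃ φ ψ : MF, definesBF φ f ∧ MLFrag (MOgen hd hb O) ψ ∧ (φ.iff ψ) ∈ Λ}

/-- `β(Φ)`: the set of Boolean functions defined by propositional formulas in `Φ`. -/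
def betaBF (Φ : Set MF) : Set BFun := {f | ∃ φ ∈ Φ, definesBF φ f}

/-- A set of modal formulas is simple if each member is `◇x`, `□x`, or purely
propositional. -/
def IsSimpleSet (Φ : Set MF) : Prop :=
  ∀ φ ∈ Φ, (∃ n, φ = MF.dia (MF.var n)) ∨ (∃ n, φ = MF.box (MF.var n)) ∨ φ.isProp

/-- `Φ` is `M`-simple (with `M` given by `hd`, `hb`): simple, and the modal operators
among its members are exactly those in `M`. -/
def IsMSimpleSet (hd hb : Bool) (Φ : Set MF) : Prop :=
  IsSimpleSet Φ ∧ ((∃ n, MF.dia (MF.var n) ∈ Φ) ↔ hd = true) ∧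
    ((∃ n, MF.box (MF.var n) ∈ Φ) ↔ hb = true)

/-! ### Propositional fragments `PL_O` -/

/-- Formulas of the propositional fragment `PL_O`. -/
inductive PLF (O : Set BFun) : Type
  | var : ℕ → PLF O
  | app : (f : BFun) → f ∈ O → (Fin f.arity → PLF O) → PLF O

namespace PLF

variable {O : Set BFun}

/-- Evaluation of a `PL_O`-formula under a truth assignment. -/
def eval (v : ℕ → Bool) : PLF O → Bool
  | .var n => v n
  | .app f _ args => f.eval (fun i => (args i).eval v)

/-- The variables occurring in a `PL_O`-formula. -/
def pvars : PLF O → Set ℕ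
  | .var n => {n}
  | .app _ _ args => ⋃ i, (args i).pvars

/-- The set of subformulas of a `PL_O`-formula. -/
def subf : PLF O → Set (PLF O)
  | .var n => {PLF.var n}
  | .app f h args => insert (PLF.app f h args) (⋃ i, (args i).subf)

/-- `|φ|_dag`: the number of distinct subformulas. -/
noncomputable def dagSize (φ : PLF O) : ℕ := φ.subf.ncard

/-- Equivalence of propositional formulas. -/
def equivPLF (φ ψ : PLF O) : Prop := ∀ v, φ.eval v = ψ.eval v

/-- `φ` fits the labeled example `(V, lab)`. -/
def fits (φ : PLF O) (e : (ℕ → Bool) × Bool) : Prop := φ.eval e.1 = e.2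

end PLF

/-- `E` uniquely characterizes `φ` with respect to the class `L` of formulas. -/
def uniqCharPL {O : Set BFun} (φ : PLF O) (L : Set (PLF O))
    (E : Set ((ℕ → Bool) × Bool)) : Prop :=
  (∀ e ∈ E, φ.fits e) ∧ ∀ ψ ∈ L, (∀ e ∈ E, ψ.fits e) → φ.equivPLF ψ

/-! ### Concept classes and PC-reductions -/

/-- A concept `c` fits the labeled example `(e, lab)`. -/
def ccFits {C : Type*} {E : Type*} (l : C → Set E) (c : C) (e : E × Bool) : Prop :=
  e.1 ∈ l c ↔ e.2 = true

/-- `S` uniquely characterizes the concept `c` within the concept class given by `l`. -/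
def ccUniqChar {C : Type*} {E : Type*} (l : C → Set E) (c : C) (S : Set (E × Bool)) : Prop :=
  (∀ e ∈ S, ccFits l c e) ∧ ∀ c', (∀ e ∈ S, ccFits l c' e) → l c' = l c

/-- A PC-reduction between concept classes. -/
structure PCRed {C1 : Type*} {E1 : Type*} {C2 : Type*} {E2 : Type*}
    (l1 : C1 → Set E1) (l2 : C2 → Set E2) where
  fc : C1 → C2
  he : E1 → E2
  cond1 : ∀ c e, e ∈ l1 c ↔ he e ∈ l2 (fc c)
  cond2 : ∀ e : E2, (∀ c, e ∈ l2 (fc c)) ∨ (∀ c, e ∉ l2 (fc c)) ∨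
    ∃ e' : E1, {c | e ∈ l2 (fc c)} = {c | e' ∈ l1 c}

/-- Extend an assignment on `PROP` to all variables (by `false` elsewhere). -/
def extAssign (PROP : Finset ℕ) (v : {x // x ∈ PROP} → Bool) : ℕ → Bool :=
  fun n => if h : n ∈ PROP then v ⟨n, h⟩ else false

/-- The concept class `PL_O[PROP]`: concepts are `PL_O`-formulas with variables in `PROP`,
examples are truth assignments on `PROP`. -/
def plSem (O : Set BFun) (PROP : Finset ℕ) :
    {φ : PLF O // φ.pvars ⊆ ↑PROP} → Set ({x // x ∈ PROP} → Bool) :=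
  fun φ => {v | φ.1.eval (extAssign PROP v) = true}

/-! ### Simple modal fragments as syntax, and finite pointed Kripke models -/

/-- Formulas of the simple modal fragment `ML_{M ∪ O}` (as a syntax): Boolean connectives
from `O`, plus `◇` if `hd` and `□` if `hb`. -/
inductive MLF (O : Set BFun) (hd hb : Bool) : Type
  | var : ℕ → MLF O hd hb
  | app : (f : BFun) → f ∈ O → (Fin f.arity → MLF O hd hb) → MLF O hd hb
  | dia : hd = true → MLF O hd hb → MLF O hd hb
  | box : hb = true → MLF O hd hb → MLF O hd hb

/-- Propositional application of a Boolean function to propositions. -/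
def BFun.evalP (f : BFun) (P : Fin f.arity → Prop) : Prop :=
  f.eval (fun i => @decide (P i) (Classical.propDecidable _)) = true

namespace MLF

variable {O : Set BFun} {hd hb : Bool}

/-- Kripke satisfaction for simple-fragment formulas. -/
def msat {W : Type} (R : W → W → Prop) (V : ℕ → W → Prop) :
    MLF O hd hb → W → Prop
  | .var n, w => V n w
  | .app f _ args, w => f.evalP (fun i => msat R V (args i) w)
  | .dia _ φ, w => ∃ u, R w u ∧ msat R V φ u
  | .box _ φ, w => ∀ u, R w u → msat R V φ u

/-- Variables of a simple-fragment formula. -/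
def mvars : MLF O hd hb → Set ℕ
  | .var n => {n}
  | .app _ _ args => ⋃ i, (args i).mvars
  | .dia _ φ => φ.mvars
  | .box _ φ => φ.mvars

end MLF

/-- A finite pointed Kripke model. -/
structure FPModel : Type 1 where
  W : Type
  fin : Finite W
  R : W → W → Prop
  V : ℕ → W → Prop
  pt : W

/-- The concept class `ML_{O,∘}[{p}]` (with `p` the variable `0`): concepts are
simple-fragment formulas over the single variable `p`, examples are finite pointed
Kripke models. -/
def mlSem (O : Set BFun) (hd hb : Bool) :
    {φ : MLF O hd hb // φ.mvars ⊆ {0}} → Set FPModel :=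
  fun φ => {M | MLF.msat M.R M.V φ.1 M.pt}

/-- Satisfaction of a modal formula in a finite pointed Kripke model. -/
def msatMF (M : FPModel) (φ : MF) : Prop := MF.sat M.R M.V φ M.pt

/-- A modal formula fits a labeled example (a finite pointed model with a label). -/
def fitsMF (φ : MF) (e : FPModel × Bool) : Prop := msatMF e.1 φ ↔ e.2 = true

/-- `K`-equivalence of modal formulas: truth at the same worlds of all Kripke models. -/
def KequivMF (φ ψ : MF) : Prop :=
  ∀ (W : Type) (R : W → W → Prop) (V : ℕ → W → Prop) (w : W),
    MF.sat R V φ w ↔ MF.sat R V ψ w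

/-- `E` uniquely characterizes `φ` relative to the fragment `L` (with respect to `K`). -/
def uniqCharMF (φ : MF) (L : Set MF) (E : Set (FPModel × Bool)) : Prop :=
  (∀ e ∈ E, fitsMF φ e) ∧ ∀ ψ ∈ L, (∀ e ∈ E, fitsMF ψ e) → KequivMF φ ψ

/-- `ML_Φ[P]`: the fragment generated by `Φ`, restricted to variables in `P`. -/
def fragSimple (Φ : Set MF) (P : Set ℕ) : Set MF :=
  {φ | MLFrag Φ φ ∧ φ.vars ⊆ P}

/-- `ML_{M∪O}[P]`. -/
def fragMO (hd hb : Bool) (O : Set BFun) (P : Set ℕ) : Set MF :=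
  fragSimple (MOgen hd hb O) P

/-- For a simple set `Φ`: the modal operators of `Φ` are among those specified by
`hd`, `hb`, and `β(Φ)` is contained in the clone generated by `O`. -/
def simpleLeOps (Φ : Set MF) (O : Set BFun) (hd hb : Bool) : Prop :=
  ((∃ n, MF.dia (MF.var n) ∈ Φ) → hd = true) ∧
  ((∃ n, MF.box (MF.var n) ∈ Φ) → hb = true) ∧
  cloneGen (betaBF Φ) ⊆ cloneGen O

/-- Decoding of a natural number as a labeled example (a finite pointed Kripke model with
a Boolean label). -/
def decodeEx (c : ℕ) : FPModel × Bool :=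
  match Denumerable.ofNat (ℕ × List (ℕ × ℕ) × List (ℕ × ℕ) × ℕ × ℕ) c with
  | (n, edges, val, pt, b) =>
    (⟨Fin (n + 1), inferInstance,
      fun u v => (u.val, v.val) ∈ edges,
      fun k w => (k, w.val) ∈ val,
      ⟨pt % (n + 1), Nat.mod_lt pt (Nat.succ_pos n)⟩⟩, b % 2 == 1)

/-! ### Auxiliary lemmas for `stmt17` -/

section Stmt17Aux

lemma aux_bool_of_iff {b c : Bool} (h : (b = true) ↔ (c = true)) : b = c := by
  cases b <;> cases c <;> simp_all

lemma aux_vars_subst (φ : MF) (σ : ℕ → MF) (h : ∀ n, (σ n).vars ⊆ {0}) :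
    (φ.subst σ).vars ⊆ {0} := by
  induction φ with
  | var n => exact h n
  | neg φ ih => exact ih
  | and φ ψ ih1 ih2 => exact Set.union_subset ih1 ih2
  | or φ ψ ih1 ih2 => exact Set.union_subset ih1 ih2
  | dia φ ih => exact ih
  | box φ ih => exact ih

lemma aux_sat_subst (φ : MF) (σ : ℕ → MF) {W : Type} (R : W → W → Prop)
    (V : ℕ → W → Prop) : ∀ w : W,
    MF.sat R V (φ.subst σ) w ↔ MF.sat R (fun n u => MF.sat R V (σ n) u) φ w := by
  induction φ with
  | var n => intro w; rfl
  | neg φ ih => intro w; simp [MF.subst, MF.sat, ih]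
  | and φ ψ ih1 ih2 => intro w; simp [MF.subst, MF.sat, ih1, ih2]
  | or φ ψ ih1 ih2 => intro w; simp [MF.subst, MF.sat, ih1, ih2]
  | dia φ ih => intro w; simp [MF.subst, MF.sat, ih]
  | box φ ih => intro w; simp [MF.subst, MF.sat, ih]

lemma aux_sat_prop (φ : MF) (h : φ.isProp) {W : Type} (R : W → W → Prop)
    (V : ℕ → W → Prop) (w : W) (v : ℕ → Bool) (hv : ∀ n, V n w ↔ v n = true) :
    MF.sat R V φ w ↔ φ.propEval v = true := by
  induction φ with
  | var n => exact hv n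
  | neg φ ih => simp [MF.sat, MF.propEval, ih h]
  | and φ ψ ih1 ih2 => simp [MF.sat, MF.propEval, ih1 h.1, ih2 h.2]
  | or φ ψ ih1 ih2 => simp [MF.sat, MF.propEval, ih1 h.1, ih2 h.2]
  | dia φ ih => exact absurd h id
  | box φ ih => exact absurd h id

lemma aux_ev_per {T : Type} [Finite T] (f : T → T) (x : T) :
    ∃ i d, 1 ≤ d ∧ ∀ n, i ≤ n → d ∣ n → f^[2*n] x = f^[n] x := by
  obtain ⟨a, b, hne, heq⟩ := Finite.exists_ne_map_eq_of_infinite (fun n : ℕ => f^[n] x)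
  wlog hab : a < b generalizing a b
  · exact this b a hne.symm heq.symm (by omega)
  have key : ∀ m, a ≤ m → f^[m + (b - a)] x = f^[m] x := by
    intro m hm
    have h1 : m + (b - a) = (m - a) + b := by omega
    have h2 : (m - a) + a = m := by omega
    calc f^[m + (b-a)] x = f^[(m-a)+b] x := by rw [h1]
    _ = f^[m-a] (f^[b] x) := Function.iterate_add_apply f _ _ x
    _ = f^[m-a] (f^[a] x) := by rw [← heq]
    _ = f^[(m-a)+a] x := (Function.iterate_add_apply f _ _ x).symm
    _ = f^[m] x := by rw [h2]
  have key2 : ∀ k m, a ≤ m → f^[m + k * (b - a)] x = f^[m] x := by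
    intro k
    induction k with
    | zero => simp
    | succ k ih =>
      intro m hm
      have h3 : m + (k+1) * (b-a) = (m + (b-a)) + k * (b-a) := by ring
      rw [h3, ih _ (by omega), key m hm]
  refine ⟨a, b - a, by omega, fun n hn hdvd => ?_⟩
  obtain ⟨c, hc⟩ := hdvd
  have : 2 * n = n + c * (b - a) := by subst hc; ring
  rw [this]; exact key2 c n hn

/-- Substitution assigning `var 0`, `A`, `B` to the variables `0, 1, 2`. -/
def sigma3 (A B : MF) : ℕ → MF :=
  fun n => if n = 1 then A else if n = 2 then B else MF.var 0

lemma sigma3_cases (A B : MF) (n : ℕ) :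
    sigma3 A B n = MF.var 0 ∨ sigma3 A B n = A ∨ sigma3 A B n = B := by
  unfold sigma3; split_ifs <;> simp

lemma sigma3_zero (A B : MF) : sigma3 A B 0 = MF.var 0 := rfl
lemma sigma3_one (A B : MF) : sigma3 A B 1 = A := rfl
lemma sigma3_two (A B : MF) : sigma3 A B 2 = B := rfl

/-- Master lemma: parametric in the modal operator. -/
lemma aux_master (Φ : Set MF) (op : MF → MF)
    (Sem : (W : Type) → (W → W → Prop) → (W → Prop) → (W → Prop))
    (hsem : ∀ (W : Type) (R : W → W → Prop) (V : ℕ → W → Prop) (φ : MF) (w : W),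
      MF.sat R V (op φ) w ↔ Sem W R (MF.sat R V φ) w)
    (hchsem : ∀ (A : ℕ → Prop) (k : ℕ), Sem ℕ (fun a b => b = a + 1) A k ↔ A (k + 1))
    (hsubst : ∀ (σ : ℕ → MF), (op (MF.var 0)).subst σ = op (σ 0))
    (hvars : ∀ φ : MF, (op φ).vars = φ.vars)
    (hgen : op (MF.var 0) ∈ Φ)
    (φf : MF) (hφf : φf ∈ Φ)
    (hprop : φf.isProp)
    (hxyy : ∀ v : ℕ → Bool, v 1 = v 2 → φf.propEval v = v 0)
    (hcex : ∃ x y z : Bool, ∀ v : ℕ → Bool, v 0 = x → v 1 = y → v 2 = z →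
      φf.propEval v ≠ x) :
    ¬ ∃ E : Set (FPModel × Bool), E.Finite ∧
      uniqCharMF (MF.var 0) (fragSimple Φ {0}) E := by
  classical
  rintro ⟨E, hEfin, hfit, huniq⟩
  -- semantics of iterated operator
  have sat_iter : ∀ (n : ℕ) {W : Type} (R : W → W → Prop) (V : ℕ → W → Prop) (w : W),
      MF.sat R V (op^[n] (MF.var 0)) w ↔ (Sem W R)^[n] (V 0) w := by
    intro n
    induction n with
    | zero => intro W R V w; exact Iff.rfl
    | succ n ih =>
      intro W R V w
      rw [Function.iterate_succ_apply' op, Function.iterate_succ_apply' (Sem W R),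
        hsem]
      have h : MF.sat R V (op^[n] (MF.var 0)) = (Sem W R)^[n] (V 0) := by
        funext u; exact propext (ih R V u)
      rw [h]
  -- membership of iterated operator formulas in the fragment
  have frag_iter : ∀ k, MLFrag Φ (op^[k] (MF.var 0)) := by
    intro k
    induction k with
    | zero => exact MLFrag.var 0
    | succ k ih =>
      rw [Function.iterate_succ_apply']
      have h := MLFrag.app (op (MF.var 0)) hgen (fun _ => op^[k] (MF.var 0)) (fun _ => ih)
      rwa [hsubst] at h
  have vars_iter : ∀ k, (op^[k] (MF.var 0)).vars ⊆ {0} := by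
    intro k
    induction k with
    | zero => exact Set.Subset.rfl
    | succ k ih => rw [Function.iterate_succ_apply', hvars]; exact ih
  -- per-model eventual periodicity
  have perModel : ∀ M : FPModel, ∃ q : ℕ × ℕ, 1 ≤ q.2 ∧ ∀ n, q.1 ≤ n → q.2 ∣ n →
      (msatMF M (op^[2*n] (MF.var 0)) ↔ msatMF M (op^[n] (MF.var 0))) := by
    intro M
    haveI := M.fin
    obtain ⟨i, d, hd1, hper⟩ := aux_ev_per (Sem M.W M.R) (M.V 0)
    refine ⟨(i, d), hd1, fun n hn hdvd => ?_⟩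
    show MF.sat M.R M.V _ M.pt ↔ MF.sat M.R M.V _ M.pt
    rw [sat_iter, sat_iter, hper n hn hdvd]
  choose Q hQ using perModel
  -- a single N working for all examples
  obtain ⟨N, hN1, hNper⟩ : ∃ N, 1 ≤ N ∧ ∀ e ∈ E,
      (msatMF e.1 (op^[2*N] (MF.var 0)) ↔ msatMF e.1 (op^[N] (MF.var 0))) := by
    set F := hEfin.toFinset with hF
    refine ⟨(∏ e ∈ F, (Q e.1).2) * ((∑ e ∈ F, (Q e.1).1) + 1), ?_, ?_⟩
    · have h1 : 1 ≤ ∏ e ∈ F, (Q e.1).2 := Finset.one_le_prod' (fun e _ => (hQ e.1).1)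
      exact Nat.one_le_iff_ne_zero.mpr (Nat.mul_ne_zero (by omega) (Nat.succ_ne_zero _))
    · intro e he
      have heF : e ∈ F := hEfin.mem_toFinset.mpr he
      have h1 : 1 ≤ ∏ e ∈ F, (Q e.1).2 := Finset.one_le_prod' (fun e _ => (hQ e.1).1)
      have h2 : (Q e.1).1 ≤ ∑ e ∈ F, (Q e.1).1 :=
        Finset.single_le_sum (f := fun e => (Q e.1).1) (fun e _ => Nat.zero_le _) heF
      have h3 : (∑ e ∈ F, (Q e.1).1) + 1 ≤
          (∏ e ∈ F, (Q e.1).2) * ((∑ e ∈ F, (Q e.1).1) + 1) :=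
        Nat.le_mul_of_pos_left _ h1
      have h4 : (Q e.1).2 ∣ (∏ e ∈ F, (Q e.1).2) * ((∑ e ∈ F, (Q e.1).1) + 1) :=
        (Finset.dvd_prod_of_mem (fun e => (Q e.1).2) heF).mul_right _
      exact (hQ e.1).2 _ (by omega) h4
  -- the alternative formula ψ
  set A : MF := op^[N] (MF.var 0) with hA
  set B : MF := op^[2*N] (MF.var 0) with hB
  set ψf : MF := φf.subst (sigma3 A B) with hψ
  have hψfrag : ψf ∈ fragSimple Φ {0} := by
    constructor
    · refine MLFrag.app φf hφf _ (fun n => ?_)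
      rcases sigma3_cases A B n with h | h | h <;> rw [h]
      · exact MLFrag.var 0
      · exact frag_iter N
      · exact frag_iter (2*N)
    · refine aux_vars_subst φf _ (fun n => ?_)
      rcases sigma3_cases A B n with h | h | h <;> rw [h]
      · exact Set.Subset.rfl
      · exact vars_iter N
      · exact vars_iter (2*N)
  -- general semantics of ψ
  have hψsat : ∀ (W : Type) (R : W → W → Prop) (V : ℕ → W → Prop) (w : W),
      MF.sat R V ψf w ↔
        φf.propEval (fun n => decide (MF.sat R V (sigma3 A B n) w)) = true := by
    intro W R V w
    rw [hψ, aux_sat_subst]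
    exact aux_sat_prop φf hprop R _ w _ (fun n => (decide_eq_true_iff).symm)
  -- ψ fits all examples
  have hfits : ∀ e ∈ E, fitsMF ψf e := by
    intro e he
    have hper := hNper e he
    have h0 := hfit e he
    refine Iff.trans ?_ h0
    rw [show msatMF e.1 ψf = MF.sat e.1.R e.1.V ψf e.1.pt from rfl,
      hψsat e.1.W e.1.R e.1.V e.1.pt]
    have hv12 : (fun n => decide (MF.sat e.1.R e.1.V (sigma3 A B n) e.1.pt)) 1
        = (fun n => decide (MF.sat e.1.R e.1.V (sigma3 A B n) e.1.pt)) 2 := by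
      simp only [sigma3_one, sigma3_two]
      exact decide_eq_decide.mpr hper.symm
    rw [hxyy _ hv12]
    simp only [sigma3_zero]
    exact decide_eq_true_iff
  -- unique characterization forces K-equivalence
  have hKeq : KequivMF (MF.var 0) ψf := huniq ψf hψfrag hfits
  -- counterexample on the infinite chain
  obtain ⟨x, y, z, hcex'⟩ := hcex
  set Rc : ℕ → ℕ → Prop := fun a b => b = a + 1 with hRc
  set Vc : ℕ → ℕ → Prop := fun m k => m = 0 ∧
    ((k = 0 ∧ x = true) ∨ (k = N ∧ y = true) ∨ (k = 2*N ∧ z = true)) with hVc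
  have semiter : ∀ (n : ℕ) (A' : ℕ → Prop) (k : ℕ),
      (Sem ℕ Rc)^[n] A' k ↔ A' (k + n) := by
    intro n
    induction n with
    | zero => intro A' k; simp
    | succ n ih =>
      intro A' k
      rw [Function.iterate_succ_apply', hchsem, ih]
      have h : k + 1 + n = k + (n + 1) := by omega
      rw [h]
  have chain_iter : ∀ (n k : ℕ),
      MF.sat Rc Vc (op^[n] (MF.var 0)) k ↔ Vc 0 (k + n) := by
    intro n k
    rw [sat_iter]; exact semiter n (Vc 0) k
  have hna : N ≠ 0 := by omega
  have hna' : (0:ℕ) ≠ N := by omega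
  have hnb : 2*N ≠ 0 := by omega
  have hnb' : (0:ℕ) ≠ 2*N := by omega
  have hnc : N ≠ 2*N := by omega
  have hnc' : 2*N ≠ N := by omega
  have hsat0 : MF.sat Rc Vc (MF.var 0) 0 ↔ x = true := by
    show Vc 0 0 ↔ x = true
    simp [hVc, hna', hnb']
  have hsatA : MF.sat Rc Vc A 0 ↔ y = true := by
    rw [hA, chain_iter]
    simp [hVc, hna, hnc]
  have hsatB : MF.sat Rc Vc B 0 ↔ z = true := by
    rw [hB, chain_iter]
    simp [hVc, hnb, hnc']
  set v' : ℕ → Bool := fun n => decide (MF.sat Rc Vc (sigma3 A B n) 0) with hv'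
  have hv'0 : v' 0 = x := aux_bool_of_iff (by
    rw [hv']; simp only [sigma3_zero, decide_eq_true_iff]; exact decide_eq_true_iff.trans hsat0)
  have hv'1 : v' 1 = y := aux_bool_of_iff (by
    rw [hv']; simp only [sigma3_one, decide_eq_true_iff]; exact decide_eq_true_iff.trans hsatA)
  have hv'2 : v' 2 = z := aux_bool_of_iff (by
    rw [hv']; simp only [sigma3_two, decide_eq_true_iff]; exact decide_eq_true_iff.trans hsatB)
  have hKeq0 := hKeq ℕ Rc Vc 0
  rw [hψsat ℕ Rc Vc 0] at hKeq0
  have hfinal : φf.propEval v' = x := aux_bool_of_iff (by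
    rw [hv']; exact hKeq0.symm.trans hsat0)
  exact hcex' v' hv'0 hv'1 hv'2 hfinal

lemma aux_masterDia (Φ : Set MF) (hgen : MF.dia (MF.var 0) ∈ Φ)
    (φf : MF) (hφf : φf ∈ Φ) (hprop : φf.isProp)
    (hxyy : ∀ v : ℕ → Bool, v 1 = v 2 → φf.propEval v = v 0)
    (hcex : ∃ x y z : Bool, ∀ v : ℕ → Bool, v 0 = x → v 1 = y → v 2 = z →
      φf.propEval v ≠ x) :
    ¬ ∃ E : Set (FPModel × Bool), E.Finite ∧
      uniqCharMF (MF.var 0) (fragSimple Φ {0}) E := by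
  refine aux_master Φ MF.dia (fun W R A w => ∃ u, R w u ∧ A u) ?_ ?_ ?_ ?_ hgen
    φf hφf hprop hxyy hcex
  · intro W R V φ w; exact Iff.rfl
  · intro A k
    constructor
    · rintro ⟨u, rfl, h⟩; exact h
    · intro h; exact ⟨k + 1, rfl, h⟩
  · intro σ; rfl
  · intro φ; rfl

lemma aux_masterBox (Φ : Set MF) (hgen : MF.box (MF.var 0) ∈ Φ)
    (φf : MF) (hφf : φf ∈ Φ) (hprop : φf.isProp)
    (hxyy : ∀ v : ℕ → Bool, v 1 = v 2 → φf.propEval v = v 0)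
    (hcex : ∃ x y z : Bool, ∀ v : ℕ → Bool, v 0 = x → v 1 = y → v 2 = z →
      φf.propEval v ≠ x) :
    ¬ ∃ E : Set (FPModel × Bool), E.Finite ∧
      uniqCharMF (MF.var 0) (fragSimple Φ {0}) E := by
  refine aux_master Φ MF.box (fun W R A w => ∀ u, R w u → A u) ?_ ?_ ?_ ?_ hgen
    φf hφf hprop hxyy hcex
  · intro W R V φ w; exact Iff.rfl
  · intro A k
    constructor
    · intro h; exact h (k + 1) rfl
    · rintro h u rfl; exact h
  · intro σ; rfl
  · intro φ; rfl

/-- `(a ∧ ¬b) ∨ (¬a ∧ b)`, i.e. binary xor. -/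
def mfXor (a b : MF) : MF := .or (.and a (.neg b)) (.and (.neg a) b)

def phi3Xor : MF := mfXor (.var 0) (mfXor (.var 1) (.var 2))
def phiOxor : MF := .or (.var 0) (mfXor (.var 1) (.var 2))
def phiAimp : MF := .and (.var 0) (.or (.neg (.var 1)) (.var 2))

lemma phi3Xor_defines : definesBF phi3Xor bf3Xor := by
  constructor
  · simp [phi3Xor, mfXor, MF.isProp]
  · intro v
    cases h0 : v 0 <;> cases h1 : v 1 <;> cases h2 : v 2 <;>
      simp [phi3Xor, mfXor, MF.propEval, bf3Xor, h0, h1, h2]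

lemma phiOxor_defines : definesBF phiOxor bfOxor := by
  constructor
  · simp [phiOxor, mfXor, MF.isProp]
  · intro v
    cases h0 : v 0 <;> cases h1 : v 1 <;> cases h2 : v 2 <;>
      simp [phiOxor, mfXor, MF.propEval, bfOxor, h0, h1, h2]

lemma phiAimp_defines : definesBF phiAimp bfAimp := by
  constructor
  · simp [phiAimp, MF.isProp]
  · intro v
    cases h0 : v 0 <;> cases h1 : v 1 <;> cases h2 : v 2 <;>
      simp [phiAimp, MF.propEval, bfAimp, h0, h1, h2]

lemma phi3Xor_xyy : ∀ v : ℕ → Bool, v 1 = v 2 → phi3Xor.propEval v = v 0 := by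
  intro v h
  cases h0 : v 0 <;> cases h2 : v 2 <;>
    simp [phi3Xor, mfXor, MF.propEval, h0, h2, h]

lemma phiOxor_xyy : ∀ v : ℕ → Bool, v 1 = v 2 → phiOxor.propEval v = v 0 := by
  intro v h
  cases h0 : v 0 <;> cases h2 : v 2 <;>
    simp [phiOxor, mfXor, MF.propEval, h0, h2, h]

lemma phiAimp_xyy : ∀ v : ℕ → Bool, v 1 = v 2 → phiAimp.propEval v = v 0 := by
  intro v h
  cases h0 : v 0 <;> cases h2 : v 2 <;>
    simp [phiAimp, MF.propEval, h0, h2, h]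

lemma phi3Xor_cex : ∃ x y z : Bool, ∀ v : ℕ → Bool, v 0 = x → v 1 = y → v 2 = z →
    phi3Xor.propEval v ≠ x := by
  refine ⟨false, true, false, fun v h0 h1 h2 => ?_⟩
  simp [phi3Xor, mfXor, MF.propEval, h0, h1, h2]

lemma phiOxor_cex : ∃ x y z : Bool, ∀ v : ℕ → Bool, v 0 = x → v 1 = y → v 2 = z →
    phiOxor.propEval v ≠ x := by
  refine ⟨false, true, false, fun v h0 h1 h2 => ?_⟩
  simp [phiOxor, mfXor, MF.propEval, h0, h1, h2]

lemma phiAimp_cex : ∃ x y z : Bool, ∀ v : ℕ → Bool, v 0 = x → v 1 = y → v 2 = z →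
    phiAimp.propEval v ≠ x := by
  refine ⟨true, true, false, fun v h0 h1 h2 => ?_⟩
  simp [phiAimp, MF.propEval, h0, h1, h2]

end Stmt17Aux
theorem stmt17 :
    ∀ O ∈ ({{bf3Xor}, {bfOxor}, {bfAimp}} : Set (Set BFun)),
    ∀ hd hb : Bool, hd ≠ hb →
      (¬ ∃ E : Set (FPModel × Bool), E.Finite ∧
        uniqCharMF (MF.var 0) (fragMO hd hb O {0}) E) ∧
      ¬ (∀ φ ∈ fragMO hd hb O {0}, ∃ E : Set (FPModel × Bool), E.Finite ∧
        uniqCharMF φ (fragMO hd hb O {0}) E) := by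
  intro O hO hd hb hne
  -- obtain the defining formula for the generator of O
  obtain ⟨φf, hdef, hxyy, hcex⟩ :
      ∃ φf : MF, (∃ f ∈ O, definesBF φf f) ∧
        (∀ v : ℕ → Bool, v 1 = v 2 → φf.propEval v = v 0) ∧
        (∃ x y z : Bool, ∀ v : ℕ → Bool, v 0 = x → v 1 = y → v 2 = z →
          φf.propEval v ≠ x) := by
    simp only [Set.mem_insert_iff, Set.mem_singleton_iff] at hO
    rcases hO with rfl | rfl | rfl
    · exact ⟨phi3Xor, ⟨bf3Xor, rfl, phi3Xor_defines⟩, phi3Xor_xyy, phi3Xor_cex⟩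
    · exact ⟨phiOxor, ⟨bfOxor, rfl, phiOxor_defines⟩, phiOxor_xyy, phiOxor_cex⟩
    · exact ⟨phiAimp, ⟨bfAimp, rfl, phiAimp_defines⟩, phiAimp_xyy, phiAimp_cex⟩
  have hφf : φf ∈ MOgen hd hb O := Or.inr (Or.inr hdef)
  have hprop : φf.isProp := by
    obtain ⟨f, -, hd2⟩ := hdef
    exact hd2.1
  have key : ¬ ∃ E : Set (FPModel × Bool), E.Finite ∧
      uniqCharMF (MF.var 0) (fragMO hd hb O {0}) E := by
    cases hd <;> cases hb
    · exact absurd rfl hne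
    · exact aux_masterBox (MOgen false true O) (Or.inr (Or.inl ⟨rfl, rfl⟩))
        φf hφf hprop hxyy hcex
    · exact aux_masterDia (MOgen true false O) (Or.inl ⟨rfl, rfl⟩)
        φf hφf hprop hxyy hcex
    · exact absurd rfl hne
  refine ⟨key, fun hall => key ?_⟩
  exact hall (MF.var 0) ⟨MLFrag.var 0, Set.Subset.rfl⟩
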